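/- The system of equations zm³ − m² − zm − 1 = 0 and 3zm² − 2m − z = 0 in complex numbers (z,m) has exactly four solutions: (−ζ, ω), (ζ, −ω), (−i/ζ, i/ω), (i/ζ, −i/ω), where ω = √(√5−2) and ζ = √((11+5√5)/2). -/

import Mathlib

theorem stmt_3 :
    {p : ℂ × ℂ | p.1 * p.2 ^ 3 - p.2 ^ 2 - p.1 * p.2 - 1 = 0 ∧
        3 * p.1 * p.2 ^ 2 - 2 * p.2 - p.1 = 0} =
      {(-(Real.sqrt ((11 + 5 * Real.sqrt 5) / 2) : ℂ), (Real.sqrt (Real.sqrt 5 - 2) : ℂ)),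
       ((Real.sqrt ((11 + 5 * Real.sqrt 5) / 2) : ℂ), -(Real.sqrt (Real.sqrt 5 - 2) : ℂ)),
       (-(Complex.I / (Real.sqrt ((11 + 5 * Real.sqrt 5) / 2) : ℂ)),
        Complex.I / (Real.sqrt (Real.sqrt 5 - 2) : ℂ)),
       (Complex.I / (Real.sqrt ((11 + 5 * Real.sqrt 5) / 2) : ℂ),
        -(Complex.I / (Real.sqrt (Real.sqrt 5 - 2) : ℂ)))} := by
  set r : ℝ := Real.sqrt 5 with hrdef
  set w : ℝ := Real.sqrt (r - 2) with hwdef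
  set s : ℝ := Real.sqrt ((11 + 5 * r) / 2) with hsdef
  have h5 : r ^ 2 = 5 := Real.sq_sqrt (by norm_num)
  have hr0 : 0 ≤ r := Real.sqrt_nonneg 5
  have hr2 : 2 < r := by nlinarith
  have hr73 : r < 7/3 := by nlinarith
  have hw2 : w ^ 2 = r - 2 := Real.sq_sqrt (by linarith)
  have hwpos : 0 < w := Real.sqrt_pos.mpr (by linarith)
  have hs2 : s ^ 2 = (11 + 5 * r) / 2 := Real.sq_sqrt (by nlinarith)
  have hspos : 0 < s := Real.sqrt_pos.mpr (by nlinarith)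
  have hsw : 2 * s * w = r + 1 := by
    have key : (2*s*w - (r+1)) * (2*s*w + (r+1)) = 0 := by
      linear_combination (4*w^2) * hs2 + (2*(11+5*r)) * hw2 + 9 * h5
    rcases mul_eq_zero.mp key with h | h
    · linarith
    · nlinarith [mul_pos hspos hwpos]
  have hsw7 : s * (7 - 3*r) = 2 * w := by
    have hwne : w ≠ 0 := ne_of_gt hwpos
    apply mul_right_cancel₀ hwne
    linear_combination ((7-3*r)/2) * hsw - 2 * hw2 - (3/2) * h5
  -- complex versions
  set S : ℂ := (s : ℂ) with hSdef
  set W : ℂ := (w : ℂ) with hWdef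
  set R : ℂ := (r : ℂ) with hRdef
  have hw2c : W ^ 2 = R - 2 := by rw [hWdef, hRdef]; exact_mod_cast congrArg (Complex.ofReal) hw2
  have h5c : R ^ 2 = 5 := by rw [hRdef]; exact_mod_cast congrArg (Complex.ofReal) h5
  have hswc : 2 * S * W = R + 1 := by rw [hSdef, hWdef, hRdef]; exact_mod_cast congrArg (Complex.ofReal) hsw
  have hsw7c : S * (7 - 3*R) = 2 * W := by rw [hSdef, hWdef, hRdef]; exact_mod_cast congrArg (Complex.ofReal) hsw7
  have hI : Complex.I ^ 2 = -1 := Complex.I_sq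
  have hW0 : W ≠ 0 := by rw [hWdef]; exact_mod_cast ne_of_gt hwpos
  have hS0 : S ≠ 0 := by rw [hSdef]; exact_mod_cast ne_of_gt hspos
  have h2W0 : (2 * W) ≠ 0 := by simp [hW0]
  have h2IW0 : (2 * Complex.I * W) ≠ 0 := by simp [hW0, Complex.I_ne_zero]
  ext ⟨z, m⟩
  simp only [Set.mem_setOf_eq, Set.mem_insert_iff, Set.mem_singleton_iff, Prod.mk.injEq]
  constructor
  · rintro ⟨h1, h2⟩
    have hk : m ^ 2 + 2*z*m + 3 = 0 := by linear_combination m * h2 - 3 * h1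
    have hm4 : m ^ 4 + 4*m ^ 2 - 1 = 0 := by
      linear_combination (-(2*m)/3) * h2 + ((3*m^2-1)/3) * hk
    have hwc4 : W ^ 4 + 4 * W ^ 2 - 1 = 0 := by
      linear_combination (W^2 + R + 2) * hw2c + h5c
    have hWm : (m - W) * (m + W) * (W*m - Complex.I) * (W*m + Complex.I) = 0 := by
      linear_combination (W^2) * hm4 - (m^2) * hwc4 + (W^2 - m^2) * hI
    rcases mul_eq_zero.mp hWm with h3 | h3
    · rcases mul_eq_zero.mp h3 with h3 | h3
      · rcases mul_eq_zero.mp h3 with h4 | h4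
        · -- m = W
          left
          have hz : (2*W) * z = (2*W) * (-S) := by
            linear_combination hk - (m + W + 2*z) * h4 + hswc - hw2c
          exact ⟨mul_left_cancel₀ h2W0 hz, by linear_combination h4⟩
        · -- m = -W
          right; left
          have hz : (2*W) * z = (2*W) * S := by
            linear_combination -hk + (m - W + 2*z) * h4 - hswc + hw2c
          exact ⟨mul_left_cancel₀ h2W0 hz, by linear_combination h4⟩
      · -- W*m = I
        right; right; left
        have hA : 2*Complex.I*W*z = 1 - 3*W^2 := by
          linear_combination W^2 * hk - (W*m + Complex.I + 2*z*W) * h3 - hI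
        have hz : (2*Complex.I*W) * (S*z) = (2*Complex.I*W) * (-Complex.I) := by
          linear_combination S * hA - 3*S*hw2c + hsw7c + (2*W) * hI
        have hz2 : S * z = -Complex.I := mul_left_cancel₀ h2IW0 hz
        constructor
        · have hz3 : z = -Complex.I / S := by
            rw [eq_div_iff hS0]; linear_combination hz2
          rw [neg_div] at hz3; exact hz3
        · rw [eq_div_iff hW0]; linear_combination h3
    · -- W*m = -I
      right; right; right
      have hA : 2*Complex.I*W*z = 3*W^2 - 1 := by
        linear_combination -(W^2) * hk + (W*m - Complex.I + 2*z*W) * h3 + hI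
      have hz : (2*Complex.I*W) * (S*z) = (2*Complex.I*W) * Complex.I := by
        linear_combination S * hA + 3*S*hw2c - hsw7c - (2*W) * hI
      have hz2 : S * z = Complex.I := mul_left_cancel₀ h2IW0 hz
      constructor
      · rw [eq_comm, div_eq_iff hS0, eq_comm]; linear_combination hz2
      · have hm3 : m = -Complex.I / W := by
          rw [eq_div_iff hW0]; linear_combination h3
        rw [neg_div] at hm3; exact hm3
  · rintro (⟨rfl, rfl⟩ | ⟨rfl, rfl⟩ | ⟨rfl, rfl⟩ | ⟨rfl, rfl⟩)
    · constructor
      · linear_combination ((1/2) + (-1/2)*W^2) * hswc + ((-3/2) + (-1/2)*R) * hw2c + ((-1/2)) * h5c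
      · linear_combination ((-3/2)*W) * hswc + ((9/4)*S) * h5c + ((7/4) + (3/4)*R) * hsw7c
    · constructor
      · linear_combination ((1/2) + (-1/2)*W^2) * hswc + ((-3/2) + (-1/2)*R) * hw2c + ((-1/2)) * h5c
      · linear_combination ((3/2)*W) * hswc + ((-9/4)*S) * h5c + ((-7/4) + (-3/4)*R) * hsw7c
    · constructor
      · field_simp [hS0, hW0]
        linear_combination ((1/4)*W^2 + (-1/2)*W^2*Complex.I^4 + (1/4)*W^2*R + (-3/4)*W^4 + (-1/4)*W^4*R + (1/2)*S*W^3 + (-1/2)*S*W^5) * hswc + ((7/4) + (-1/2)*Complex.I^4 + (7/4)*R + (-1/2)*R*Complex.I^4 + (-1/4)*R^2 + (-1/4)*R^3 + (-3/4)*W^2 + (-1)*W^2*R + (-1/4)*W^2*R^2) * hw2c + (1 + (-1/2)*Complex.I^4 + (1/4)*R + (-1/4)*R^2) * h5c + ((3/2) + (-3/2)*Complex.I^2 + (-1/2)*R + (1/2)*R*Complex.I^2) * hI + (-S*W + W^2 - (Complex.I^2-1) + (Complex.I^2-1)*S*W^3) * hI + ((1/2)*(1+W^4) + (1/2)*(S*W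 + (R+1)/2)*(W^4-W^2)) * hswc + ((-1-((R+1)/2)^2) + ((R+1)/2 + ((R+1)/2)^2)*(W^2+R-2)) * hw2c + ((R^2-R-4)/4) * h5c
      · field_simp [hS0, hW0]
        linear_combination (Complex.I + (-1/2)*R*Complex.I + (1/2)*W^2*Complex.I + (-1)*S*W*Complex.I) * hswc + ((1/2)*Complex.I + (1/2)*R*Complex.I) * hw2c + (-3*Complex.I) * hI + (Complex.I*((-5-W^2)/2 + S*W + (R+1)/2)) * hswc + (Complex.I*(1-(R+1)/2)) * hw2c
    · constructor
      · field_simp [hS0, hW0]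
        linear_combination ((1/4)*W^2 + (-1/2)*W^2*Complex.I^4 + (1/4)*W^2*R + (-3/4)*W^4 + (-1/4)*W^4*R + (1/2)*S*W^3 + (-1/2)*S*W^5) * hswc + ((7/4) + (-1/2)*Complex.I^4 + (7/4)*R + (-1/2)*R*Complex.I^4 + (-1/4)*R^2 + (-1/4)*R^3 + (-3/4)*W^2 + (-1)*W^2*R + (-1/4)*W^2*R^2) * hw2c + (1 + (-1/2)*Complex.I^4 + (1/4)*R + (-1/4)*R^2) * h5c + ((3/2) + (-3/2)*Complex.I^2 + (-1/2)*R + (1/2)*R*Complex.I^2) * hI + (-S*W + W^2 - (Complex.I^2-1) + (Complex.I^2-1)*S*W^3) * hI + ((1/2)*(1+W^4) + (1/2)*(S*W + (R+1)/2)*(W^4-W^2)) * hswc + ((-1-((R+1)/2)^2) + ((R+1)/2 + ((R+1)/2)^2)*(W^2+R-2)) * hw2c + ((R^2-R-4)/4) * h5c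
      · field_simp [hS0, hW0]
        linear_combination ((-1)*Complex.I + (1/2)*R*Complex.I + (-1/2)*W^2*Complex.I + S*W*Complex.I) * hswc + ((-1/2)*Complex.I + (-1/2)*R*Complex.I) * hw2c - (-3*Complex.I) * hI - (Complex.I*((-5-W^2)/2 + S*W + (R+1)/2)) * hswc - (Complex.I*(1-(R+1)/2)) * hw2c
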